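/- Let M_C(x) be the skew-symmetric 4×4 real matrix with entries M₁₂ = x₃²+x₄², M₁₃ = x₂x₃−x₁x₄, M₁₄ = −(x₂x₄+x₁x₃), M₂₃ = x₁x₃+x₂x₄, M₂₄ = x₂x₃−x₁x₄, M₃₄ = x₁²+x₂² (and Mⱼᵢ = −Mᵢⱼ, Mᵢᵢ = 0), for x = (x₁,x₂,x₃,x₄) ∈ ℝ⁴. Then: (a) det M_C(x) = 0 for all x ∈ ℝ⁴ (equivalently its Pfaffian M₁₂M₃₄ − M₁₃M₂₄ + M₁₄M₂₃ vanishes identically); (b) M_C(x) = 0 if and only if x = 0; consequently M_C(x) has rank exactly 2 for every x ≠ 0 and rank 0 at x = 0. -/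
import Mathlib


/-- The coefficient matrix of the quadratic Poisson bivector `π_C` at a
Lefschetz singular point; coordinates x₁,x₂,x₃,x₄ are the indices 0,1,2,3.
Entries: `M₁₂ = x₃²+x₄², M₁₃ = x₂x₃−x₁x₄, M₁₄ = −(x₂x₄+x₁x₃),
M₂₃ = x₁x₃+x₂x₄, M₂₄ = x₂x₃−x₁x₄, M₃₄ = x₁²+x₂²`, skew-symmetric. -/
noncomputable def lefMatrix (x : Fin 4 → ℝ) : Matrix (Fin 4) (Fin 4) ℝ :=
  !![0, (x 2) ^ 2 + (x 3) ^ 2, x 1 * x 2 - x 0 * x 3, -(x 1 * x 3 + x 0 * x 2);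
     -((x 2) ^ 2 + (x 3) ^ 2), 0, x 0 * x 2 + x 1 * x 3, x 1 * x 2 - x 0 * x 3;
     -(x 1 * x 2 - x 0 * x 3), -(x 0 * x 2 + x 1 * x 3), 0, (x 0) ^ 2 + (x 1) ^ 2;
     x 1 * x 3 + x 0 * x 2, -(x 1 * x 2 - x 0 * x 3), -((x 0) ^ 2 + (x 1) ^ 2), 0]

noncomputable def lefC (x : Fin 4 → ℝ) : Matrix (Fin 4) (Fin 2) ℝ :=
  !![x 2, -(x 3); x 3, x 2; -(x 0), x 1; -(x 1), -(x 0)]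

noncomputable def lefD (x : Fin 4 → ℝ) : Matrix (Fin 2) (Fin 4) ℝ :=
  !![-(x 3), x 2, x 1, -(x 0); -(x 2), -(x 3), x 0, x 1]

lemma lef_decomp (x : Fin 4 → ℝ) : lefMatrix x = lefC x * lefD x := by
  ext i j
  fin_cases i <;> fin_cases j <;>
    simp [lefMatrix, lefC, lefD, Matrix.mul_apply, Fin.sum_univ_two] <;> ring

lemma lef_rank_le (x : Fin 4 → ℝ) : (lefMatrix x).rank ≤ 2 := by
  rw [lef_decomp]
  calc (lefC x * lefD x).rank ≤ (lefC x).rank := Matrix.rank_mul_le_left _ _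
    _ ≤ Fintype.card (Fin 2) := Matrix.rank_le_card_width _
    _ = 2 := by simp

lemma rank_two_of_block (M : Matrix (Fin 4) (Fin 4) ℝ) (P : Matrix (Fin 2) (Fin 4) ℝ)
    (s : ℝ) (hs : s ≠ 0) (h : P * M * P.transpose = !![0, s; -s, 0]) : 2 ≤ M.rank := by
  have h2 : (!![0, s; -s, 0] : Matrix (Fin 2) (Fin 2) ℝ).rank = 2 := by
    rw [Matrix.rank_of_isUnit]
    · simp
    · rw [Matrix.isUnit_iff_isUnit_det]
      simp [Matrix.det_fin_two]
      positivity
  calc (2 : ℕ) = (!![0, s; -s, 0] : Matrix (Fin 2) (Fin 2) ℝ).rank := h2.symm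
    _ = (P * M * P.transpose).rank := by rw [h]
    _ = (P * (M * P.transpose)).rank := by rw [Matrix.mul_assoc]
    _ ≤ (M * P.transpose).rank := Matrix.rank_mul_le_right _ _
    _ ≤ M.rank := Matrix.rank_mul_le_left _ _

/-- (a) the determinant (equivalently the Pfaffian) of `lefMatrix` vanishes
identically; (b) `lefMatrix x = 0` iff `x = 0`, and consequently the rank is
exactly 2 away from the origin and 0 at the origin. -/
theorem lefMatrix_det_rank :
    (∀ x : Fin 4 → ℝ, (lefMatrix x).det = 0) ∧
    (∀ x : Fin 4 → ℝ,
      lefMatrix x 0 1 * lefMatrix x 2 3 - lefMatrix x 0 2 * lefMatrix x 1 3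
        + lefMatrix x 0 3 * lefMatrix x 1 2 = 0) ∧
    (∀ x : Fin 4 → ℝ, lefMatrix x = 0 ↔ x = 0) ∧
    (∀ x : Fin 4 → ℝ, x ≠ 0 → (lefMatrix x).rank = 2) ∧
    (lefMatrix 0).rank = 0 := by
  have hzero : ∀ x : Fin 4 → ℝ, lefMatrix x = 0 ↔ x = 0 := by
    intro x
    constructor
    · intro h
      have h01 := congrFun (congrFun h 0) 1
      have h23 := congrFun (congrFun h 2) 3
      simp [lefMatrix] at h01 h23
      funext i
      fin_cases i <;> simp <;> nlinarith [sq_nonneg (x 0), sq_nonneg (x 1), sq_nonneg (x 2), sq_nonneg (x 3)]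
    · rintro rfl
      ext i j
      fin_cases i <;> fin_cases j <;> simp [lefMatrix, Matrix.vecHead, Matrix.vecTail]
  refine ⟨?_, ?_, hzero, ?_, ?_⟩
  · intro x
    by_contra hdet
    have h4 : (lefMatrix x).rank = 4 := by
      have := Matrix.rank_of_isUnit (lefMatrix x)
        (Matrix.isUnit_iff_isUnit_det _ |>.mpr (isUnit_iff_ne_zero.mpr hdet))
      simpa using this
    have := lef_rank_le x
    omega
  · intro x
    simp [lefMatrix]
    ring
  · intro x hx
    refine le_antisymm (lef_rank_le x) ?_
    have hcase : (x 0) ^ 2 + (x 1) ^ 2 ≠ 0 ∨ (x 2) ^ 2 + (x 3) ^ 2 ≠ 0 := by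
      by_contra hc
      push_neg at hc
      apply hx
      funext i
      fin_cases i <;> simp <;> nlinarith [sq_nonneg (x 0), sq_nonneg (x 1), sq_nonneg (x 2), sq_nonneg (x 3), hc.1, hc.2]
    rcases hcase with h | h
    · refine rank_two_of_block (lefMatrix x) !![0,0,1,0;0,0,0,1] _ h ?_
      ext i j
      fin_cases i <;> fin_cases j <;>
        simp [lefMatrix, Matrix.mul_apply, Fin.sum_univ_four, Matrix.transpose_apply,
          Matrix.vecHead, Matrix.vecTail]
    · refine rank_two_of_block (lefMatrix x) !![1,0,0,0;0,1,0,0] _ h ?_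
      ext i j
      fin_cases i <;> fin_cases j <;>
        simp [lefMatrix, Matrix.mul_apply, Fin.sum_univ_four, Matrix.transpose_apply,
          Matrix.vecHead, Matrix.vecTail]
  · rw [(hzero 0).mpr rfl, Matrix.rank_zero]
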